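/- Let ε = (ε¹₁,ε¹₂,ε²₁,ε²₂) ∈ [0,1/2]⁴. Then the following are equivalent: (a) for every p ∈ [0,1/2]⁴ satisfying max S₁p ≤ √2/2, (p, ε) ∈ ELFP; (b) max S₀ε ≤ (3 − √2)/2 and max S₁ε ≤ 1/2. (This characterizes the set Fit for the quantum ('quant') constraint.) -/

import Mathlib

open Finset

/-- The signed sum `±(x₁₁−¼) ± (x₁₂−¼) ± (x₂₁−¼) ± (x₂₂−¼)` over the four components of `x`,
with a `+` sign exactly where the sign choice `s` is `true`. -/
noncomputable def Sval (x : Fin 2 → Fin 2 → ℝ) (s : Fin 2 → Fin 2 → Bool) : ℝ :=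
  ∑ i : Fin 2, ∑ j : Fin 2, (if s i j then (1 : ℝ) else -1) * (x i j - 1 / 4)

/-- The number of `+` signs in a sign choice. -/
def plusCount (s : Fin 2 → Fin 2 → Bool) : ℕ :=
  (Finset.univ.filter fun ij : Fin 2 × Fin 2 => s ij.1 ij.2 = true).card

/-- `max Sx`: the maximum of the signed sums over all 16 sign choices. -/
noncomputable def maxS (x : Fin 2 → Fin 2 → ℝ) : ℝ :=
  Finset.univ.sup' Finset.univ_nonempty (Sval x)

/-- `max S₀x`: the maximum over sign choices with an even number of `+` signs. -/
noncomputable def maxS0 (x : Fin 2 → Fin 2 → ℝ) : ℝ :=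
  (Finset.univ.filter fun s : Fin 2 → Fin 2 → Bool => Even (plusCount s)).sup'
    ⟨fun _ _ => false, by decide⟩ (Sval x)

/-- `max S₁x`: the maximum over sign choices with an odd number of `+` signs. -/
noncomputable def maxS1 (x : Fin 2 → Fin 2 → ℝ) : ℝ :=
  (Finset.univ.filter fun s : Fin 2 → Fin 2 → Bool => ¬ Even (plusCount s)).sup'
    ⟨fun i j => i == 0 && j == 0, by decide⟩ (Sval x)

/-- `r ∈ S₀x`: `r` is one of the signed sums with an even number of `+` signs. -/
def memS0 (x : Fin 2 → Fin 2 → ℝ) (r : ℝ) : Prop :=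
  ∃ s : Fin 2 → Fin 2 → Bool, Even (plusCount s) ∧ Sval x s = r

/-- The Extended Linear Feasibility Polytope: `(p, ε) ∈ ELFP` iff there is a joint
distribution on `({−1,+1})⁸` — encoded as `Fin 2 → Fin 2 → Fin 2 → Bool`, `h k i j` being the
value of `Hᵏᵢⱼ` (`true` standing for `+1`) — with uniform ±1 one-dimensional marginals,
`Pr[H¹ᵢⱼ = +1, H²ᵢⱼ = +1] = p i j`, `Pr[H¹ᵢ₁ = +1, H¹ᵢ₂ = +1] = ε 0 i`, and
`Pr[H²₁ⱼ = +1, H²₂ⱼ = +1] = ε 1 j`. -/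
def ELFP (p ε : Fin 2 → Fin 2 → ℝ) : Prop :=
  ∃ μ : (Fin 2 → Fin 2 → Fin 2 → Bool) → ℝ,
    (∀ h, 0 ≤ μ h) ∧
    (∑ h : Fin 2 → Fin 2 → Fin 2 → Bool, μ h = 1) ∧
    (∀ k i j : Fin 2,
      ∑ h ∈ Finset.univ.filter
          (fun h : Fin 2 → Fin 2 → Fin 2 → Bool => h k i j = true), μ h = 1 / 2) ∧
    (∀ i j : Fin 2,
      ∑ h ∈ Finset.univ.filter
          (fun h : Fin 2 → Fin 2 → Fin 2 → Bool => h 0 i j = true ∧ h 1 i j = true), μ h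
        = p i j) ∧
    (∀ i : Fin 2,
      ∑ h ∈ Finset.univ.filter
          (fun h : Fin 2 → Fin 2 → Fin 2 → Bool => h 0 i 0 = true ∧ h 0 i 1 = true), μ h
        = ε 0 i) ∧
    (∀ j : Fin 2,
      ∑ h ∈ Finset.univ.filter
          (fun h : Fin 2 → Fin 2 → Fin 2 → Bool => h 1 0 j = true ∧ h 1 1 j = true), μ h
        = ε 1 j)


namespace FitAux



abbrev Cfg := Fin 2 → Fin 2 → Fin 2 → Bool
abbrev Pt := Fin 2 × Fin 2 × Fin 2

def app (h : Cfg) (x : Pt) : Bool := h x.1 x.2.1 x.2.2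

noncomputable def sgn (b : Bool) : ℝ := if b then 1 else -1

def sgnZ (b : Bool) : ℤ := if b then 1 else -1

def edgeU : Fin 8 → Pt := fun e =>
  if e = 0 then (0,0,0) else if e = 1 then (0,0,1) else if e = 2 then (1,0,1) else
  if e = 3 then (1,1,1) else if e = 4 then (0,1,1) else if e = 5 then (0,1,0) else
  if e = 6 then (1,1,0) else (1,0,0)

def edgeV : Fin 8 → Pt := fun e =>
  if e = 0 then (0,0,1) else if e = 1 then (1,0,1) else if e = 2 then (1,1,1) else
  if e = 3 then (0,1,1) else if e = 4 then (0,1,0) else if e = 5 then (1,1,0) else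
  if e = 6 then (1,0,0) else (0,0,0)

noncomputable def edgeQ (p ε : Fin 2 → Fin 2 → ℝ) : Fin 8 → ℝ := fun e =>
  if e = 0 then ε 0 0 else if e = 1 then p 0 1 else if e = 2 then ε 1 1 else
  if e = 3 then p 1 1 else if e = 4 then ε 0 1 else if e = 5 then p 1 0 else
  if e = 6 then ε 1 0 else p 0 0

def edgeS (s t : Fin 2 → Fin 2 → Bool) : Fin 8 → Bool := fun e =>
  if e = 0 then t 0 0 else if e = 1 then s 0 1 else if e = 2 then t 1 1 else
  if e = 3 then s 1 1 else if e = 4 then t 0 1 else if e = 5 then s 1 0 else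
  if e = 6 then t 1 0 else s 0 0

def xor4 (s : Fin 2 → Fin 2 → Bool) : Bool :=
  Bool.xor (s 0 0) (Bool.xor (s 0 1) (Bool.xor (s 1 0) (s 1 1)))

def valAt (b : Fin 8 → Bool) (t : Fin 8) : Bool :=
  if t = 0 then false else if t = 1 then b 0 else
  if t = 2 then Bool.xor (b 0) (b 1) else
  if t = 3 then Bool.xor (b 0) (Bool.xor (b 1) (b 2)) else
  if t = 4 then Bool.xor (b 0) (Bool.xor (b 1) (Bool.xor (b 2) (b 3))) else
  if t = 5 then Bool.xor (b 0) (Bool.xor (b 1) (Bool.xor (b 2) (Bool.xor (b 3) (b 4)))) else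
  if t = 6 then Bool.xor (b 0) (Bool.xor (b 1) (Bool.xor (b 2) (Bool.xor (b 3) (Bool.xor (b 4) (b 5))))) else
  Bool.xor (b 0) (Bool.xor (b 1) (Bool.xor (b 2) (Bool.xor (b 3) (Bool.xor (b 4) (Bool.xor (b 5) (b 6))))))

def xorSum (b : Fin 8 → Bool) : Bool := Bool.xor (valAt b 7) (b 7)

noncomputable def vec (b : Fin 8 → Bool) : Fin 8 → ℝ := fun e => if b e then 1 else 0

def spat (b : Fin 8 → Bool) : Fin 2 → Fin 2 → Bool := ![![!b 7, !b 1], ![!b 5, !b 3]]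
def tpat (b : Fin 8 → Bool) : Fin 2 → Fin 2 → Bool := ![![!b 0, !b 4], ![!b 6, !b 2]]

def pos : Fin 2 → Fin 2 → Fin 2 → Fin 8 := ![![![0,1],![5,4]], ![![7,2],![6,3]]]

def cfg0 (b : Fin 8 → Bool) : Cfg := fun k i j => valAt b (pos k i j)

def negc (c : Cfg) : Cfg := fun k i j => !(c k i j)

lemma eta2 (s : Fin 2 → Fin 2 → Bool) : s = ![![s 0 0, s 0 1], ![s 1 0, s 1 1]] := by
  funext i j; fin_cases i <;> fin_cases j <;> rfl

lemma eta8 (b : Fin 8 → Bool) : b = ![b 0, b 1, b 2, b 3, b 4, b 5, b 6, b 7] := by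
  funext i; fin_cases i <;> rfl

lemma eta3 (h : Cfg) : h = fun k i j =>
    ![![![h 0 0 0, h 0 0 1],![h 0 1 0, h 0 1 1]],![![h 1 0 0, h 1 0 1],![h 1 1 0, h 1 1 1]]] k i j := by
  funext k i j; fin_cases k <;> fin_cases i <;> fin_cases j <;> rfl

lemma L1 (s : Fin 2 → Fin 2 → Bool) : Even (plusCount s) ↔ xor4 s = false := by
  rw [eta2 s]
  revert s
  have : ∀ a b c d : Bool,
      Even (plusCount ![![a,b],![c,d]]) ↔ xor4 ![![a,b],![c,d]] = false := by decide
  intro s; exact this _ _ _ _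

lemma Z1 (b : Fin 8 → Bool) (hb : xorSum b = true) :
    (∏ e : Fin 8, sgnZ (b e)) = -1 := by
  rw [eta8 b] at hb ⊢
  revert hb
  have : ∀ a₀ a₁ a₂ a₃ a₄ a₅ a₆ a₇ : Bool, xorSum ![a₀,a₁,a₂,a₃,a₄,a₅,a₆,a₇] = true →
      (∏ e : Fin 8, sgnZ (![a₀,a₁,a₂,a₃,a₄,a₅,a₆,a₇] e)) = -1 := by decide
  exact this _ _ _ _ _ _ _ _

lemma Z2 (h : Cfg) :
    (∏ e : Fin 8, sgnZ (app h (edgeU e)) * sgnZ (app h (edgeV e))) = 1 := by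
  rw [eta3 h]
  have : ∀ a₀ a₁ a₂ a₃ a₄ a₅ a₆ a₇ : Bool,
      (∏ e : Fin 8, sgnZ (app (fun k i j => ![![![a₀,a₁],![a₂,a₃]],![![a₄,a₅],![a₆,a₇]]] k i j) (edgeU e)) *
        sgnZ (app (fun k i j => ![![![a₀,a₁],![a₂,a₃]],![![a₄,a₅],![a₆,a₇]]] k i j) (edgeV e))) = 1 := by decide
  exact this _ _ _ _ _ _ _ _

lemma B2 (s t : Fin 2 → Fin 2 → Bool) :
    xorSum (edgeS s t) = Bool.xor (xor4 s) (xor4 t) := by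
  rw [eta2 s, eta2 t]
  revert s t
  have : ∀ a b c d a' b' c' d' : Bool,
      xorSum (edgeS ![![a,b],![c,d]] ![![a',b'],![c',d']]) =
        Bool.xor (xor4 ![![a,b],![c,d]]) (xor4 ![![a',b'],![c',d']]) := by decide
  intro s t; exact this _ _ _ _ _ _ _ _

lemma B3 (b : Fin 8 → Bool) :
    Bool.xor (xor4 (spat b)) (xor4 (tpat b)) = xorSum b := by
  rw [eta8 b]
  have : ∀ a₀ a₁ a₂ a₃ a₄ a₅ a₆ a₇ : Bool,
      Bool.xor (xor4 (spat ![a₀,a₁,a₂,a₃,a₄,a₅,a₆,a₇])) (xor4 (tpat ![a₀,a₁,a₂,a₃,a₄,a₅,a₆,a₇])) =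
        xorSum ![a₀,a₁,a₂,a₃,a₄,a₅,a₆,a₇] := by decide
  exact this _ _ _ _ _ _ _ _

lemma B4 (b : Fin 8 → Bool) (hb : xorSum b = false) (e : Fin 8) :
    Bool.xor (app (cfg0 b) (edgeU e)) (app (cfg0 b) (edgeV e)) = b e := by
  rw [eta8 b] at hb ⊢
  revert hb
  have : ∀ a₀ a₁ a₂ a₃ a₄ a₅ a₆ a₇ : Bool, xorSum ![a₀,a₁,a₂,a₃,a₄,a₅,a₆,a₇] = false →
      ∀ e : Fin 8, Bool.xor (app (cfg0 ![a₀,a₁,a₂,a₃,a₄,a₅,a₆,a₇]) (edgeU e))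
        (app (cfg0 ![a₀,a₁,a₂,a₃,a₄,a₅,a₆,a₇]) (edgeV e)) = ![a₀,a₁,a₂,a₃,a₄,a₅,a₆,a₇] e := by decide
  exact fun hb => this _ _ _ _ _ _ _ _ hb e

lemma B5 (b : Fin 8 → Bool) (i : Fin 8) :
    xorSum (Function.update b i (!b i)) = !(xorSum b) := by
  have key : ∀ a₀ a₁ a₂ a₃ a₄ a₅ a₆ a₇ : Bool, ∀ i : Fin 8,
      xorSum (Function.update ![a₀,a₁,a₂,a₃,a₄,a₅,a₆,a₇] i (!(![a₀,a₁,a₂,a₃,a₄,a₅,a₆,a₇] i))) =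
        !(xorSum ![a₀,a₁,a₂,a₃,a₄,a₅,a₆,a₇]) := by decide
  have hb := eta8 b
  rw [hb]
  -- rewrite also inside: b i = (![...]) i
  conv_lhs => rw [← hb]
  rw [hb]
  exact key _ _ _ _ _ _ _ _ i

lemma Z3 (s : Fin 2 → Fin 2 → Bool) (hs : xor4 s = true) :
    sgnZ (s 0 0) + sgnZ (s 0 1) + sgnZ (s 1 0) + sgnZ (s 1 1) ≤ 2 := by
  rw [eta2 s] at hs ⊢
  revert hs
  have : ∀ a b c d : Bool, xor4 ![![a,b],![c,d]] = true →
      sgnZ (![![a,b],![c,d]] 0 0) + sgnZ (![![a,b],![c,d]] 0 1) +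
        sgnZ (![![a,b],![c,d]] 1 0) + sgnZ (![![a,b],![c,d]] 1 1) ≤ 2 := by decide
  exact this _ _ _ _



lemma sgn_eq_cast (b : Bool) : sgn b = (sgnZ b : ℝ) := by
  cases b <;> simp [sgn, sgnZ]

lemma sum_split (p ε : Fin 2 → Fin 2 → ℝ) (s t : Fin 2 → Fin 2 → Bool) :
    ∑ e : Fin 8, sgn (edgeS s t e) * (edgeQ p ε e - 1/4) = Sval p s + Sval ε t := by
  simp [Sval, edgeS, edgeQ, sgn, Fin.sum_univ_eight, Fin.sum_univ_two]
  ring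

/-- Correlation identity: for a joint distribution with uniform marginals at `A` and `B`,
the pair probability determines the expected product of signs. -/
lemma corr (μ : Cfg → ℝ) (htot : ∑ h : Cfg, μ h = 1)
    (A B : Cfg → Bool)
    (hu : ∑ h ∈ Finset.univ.filter (fun h => A h = true), μ h = 1/2)
    (hv : ∑ h ∈ Finset.univ.filter (fun h => B h = true), μ h = 1/2)
    (q : ℝ) (hq : ∑ h ∈ Finset.univ.filter (fun h => A h = true ∧ B h = true), μ h = q) :
    q - 1/4 = 1/4 * ∑ h : Cfg, μ h * (sgn (A h) * sgn (B h)) := by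
  have key : ∀ h : Cfg, μ h * (sgn (A h) * sgn (B h)) =
      4 * (if A h = true ∧ B h = true then μ h else 0)
      - 2 * (if A h = true then μ h else 0) - 2 * (if B h = true then μ h else 0) + μ h := by
    intro h
    cases hA : A h <;> cases hB : B h <;> simp [sgn, hA, hB] <;> ring
  have hsum : ∑ h : Cfg, μ h * (sgn (A h) * sgn (B h)) =
      4 * (∑ h : Cfg, if A h = true ∧ B h = true then μ h else 0)
      - 2 * (∑ h : Cfg, if A h = true then μ h else 0)
      - 2 * (∑ h : Cfg, if B h = true then μ h else 0) + ∑ h : Cfg, μ h := by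
    rw [Finset.sum_congr rfl (fun h _ => key h)]
    rw [Finset.sum_add_distrib, Finset.sum_sub_distrib, Finset.sum_sub_distrib,
      ← Finset.mul_sum, ← Finset.mul_sum, ← Finset.mul_sum]
  rw [hsum, ← Finset.sum_filter, ← Finset.sum_filter, ← Finset.sum_filter, htot, hu, hv, hq]
  ring

/-- If each entry is `±1` and the product is `-1`, the sum of the 8 entries is at most 6. -/
lemma sum_le_of_signs (T : Fin 8 → ℝ) (h1 : ∀ e, T e = 1 ∨ T e = -1)
    (hp : ∏ e : Fin 8, T e = -1) : ∑ e : Fin 8, T e ≤ 6 := by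
  have hne : ∃ e, T e = -1 := by
    by_contra hc
    push_neg at hc
    have : ∀ e ∈ Finset.univ, T e = 1 := fun e _ => (h1 e).resolve_right (hc e)
    rw [Finset.prod_congr rfl this] at hp
    simp at hp
    linarith
  obtain ⟨e0, he0⟩ := hne
  have hsplit : ∑ e : Fin 8, T e = T e0 + ∑ e ∈ Finset.univ.erase e0, T e :=
    (Finset.add_sum_erase _ _ (Finset.mem_univ e0)).symm
  have hb : ∑ e ∈ Finset.univ.erase e0, T e ≤ 7 := by
    have h2 : ∑ e ∈ Finset.univ.erase e0, T e ≤ ∑ _e ∈ Finset.univ.erase e0, (1:ℝ) :=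
      Finset.sum_le_sum (fun e _ => by rcases h1 e with h | h <;> rw [h] <;> norm_num)
    simp [Finset.card_erase_of_mem] at h2
    linarith
  rw [hsplit, he0]; linarith

lemma prod_sgn_eq_neg_one (s t : Fin 2 → Fin 2 → Bool)
    (hpar : Bool.xor (xor4 s) (xor4 t) = true) :
    (∏ e : Fin 8, sgn (edgeS s t e)) = -1 := by
  have hz := Z1 (edgeS s t) (by rw [B2]; exact hpar)
  have hc : ((∏ e : Fin 8, sgnZ (edgeS s t e) : ℤ) : ℝ) = -1 := by rw [hz]; norm_num
  rw [← hc]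
  push_cast [sgn_eq_cast]
  rfl

lemma prod_chi_eq_one (h : Cfg) :
    (∏ e : Fin 8, sgn (app h (edgeU e)) * sgn (app h (edgeV e))) = 1 := by
  have hz := Z2 h
  have hc : ((∏ e : Fin 8, sgnZ (app h (edgeU e)) * sgnZ (app h (edgeV e)) : ℤ) : ℝ) = 1 := by
    rw [hz]; norm_num
  rw [← hc]
  push_cast [sgn_eq_cast]
  rfl

lemma pointwise_le (s t : Fin 2 → Fin 2 → Bool)
    (hpar : Bool.xor (xor4 s) (xor4 t) = true) (h : Cfg) :
    (∑ e : Fin 8, sgn (edgeS s t e) * (sgn (app h (edgeU e)) * sgn (app h (edgeV e)))) ≤ 6 := by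
  apply sum_le_of_signs
  · intro e
    cases hb : edgeS s t e <;> cases h1 : app h (edgeU e) <;> cases h2 : app h (edgeV e) <;>
      simp [sgn] <;> norm_num
  · rw [Finset.prod_mul_distrib, prod_sgn_eq_neg_one s t hpar, prod_chi_eq_one h]
    norm_num

lemma elfp_bound (p ε : Fin 2 → Fin 2 → ℝ) (hE : ELFP p ε) (s t : Fin 2 → Fin 2 → Bool)
    (hpar : Bool.xor (xor4 s) (xor4 t) = true) :
    Sval p s + Sval ε t ≤ 3/2 := by
  obtain ⟨μ, hpos, htot, hmarg, hP, hE1, hE2⟩ := hE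
  have swapq : ∀ (A B : Cfg → Bool) (r : ℝ),
      (∑ h ∈ Finset.univ.filter (fun h => A h = true ∧ B h = true), μ h = r) →
      (∑ h ∈ Finset.univ.filter (fun h => B h = true ∧ A h = true), μ h = r) := by
    intro A B r hr
    rw [← hr]
    congr 1
    exact Finset.filter_congr (fun h _ => by tauto)
  have hc : ∀ e : Fin 8, edgeQ p ε e - 1/4
      = 1/4 * ∑ h : Cfg, μ h * (sgn (app h (edgeU e)) * sgn (app h (edgeV e))) := by
    intro e
    fin_cases e
    · exact corr μ htot _ _ (hmarg 0 0 0) (hmarg 0 0 1) _ (hE1 0)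
    · exact corr μ htot _ _ (hmarg 0 0 1) (hmarg 1 0 1) _ (hP 0 1)
    · exact corr μ htot _ _ (hmarg 1 0 1) (hmarg 1 1 1) _ (hE2 1)
    · exact corr μ htot _ _ (hmarg 1 1 1) (hmarg 0 1 1) _ (swapq _ _ _ (hP 1 1))
    · exact corr μ htot _ _ (hmarg 0 1 1) (hmarg 0 1 0) _ (swapq _ _ _ (hE1 1))
    · exact corr μ htot _ _ (hmarg 0 1 0) (hmarg 1 1 0) _ (hP 1 0)
    · exact corr μ htot _ _ (hmarg 1 1 0) (hmarg 1 0 0) _ (swapq _ _ _ (hE2 0))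
    · exact corr μ htot _ _ (hmarg 1 0 0) (hmarg 0 0 0) _ (swapq _ _ _ (hP 0 0))
  have hswap : ∑ e : Fin 8, sgn (edgeS s t e) * (edgeQ p ε e - 1/4)
      = 1/4 * ∑ h : Cfg, μ h *
          (∑ e : Fin 8, sgn (edgeS s t e) * (sgn (app h (edgeU e)) * sgn (app h (edgeV e)))) := by
    rw [Finset.sum_congr rfl (fun e (_ : e ∈ Finset.univ) => by rw [hc e])]
    rw [Finset.mul_sum]
    simp only [Finset.mul_sum]
    rw [Finset.sum_comm]
    exact Finset.sum_congr rfl fun h _ => Finset.sum_congr rfl fun e _ => by ring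
  have hle : ∑ h : Cfg, μ h *
      (∑ e : Fin 8, sgn (edgeS s t e) * (sgn (app h (edgeU e)) * sgn (app h (edgeV e)))) ≤ 6 := by
    calc ∑ h : Cfg, μ h * (∑ e : Fin 8, sgn (edgeS s t e) *
          (sgn (app h (edgeU e)) * sgn (app h (edgeV e))))
        ≤ ∑ h : Cfg, μ h * 6 :=
          Finset.sum_le_sum fun h _ =>
            mul_le_mul_of_nonneg_left (pointwise_le s t hpar h) (hpos h)
      _ = 6 := by rw [← Finset.sum_mul, htot]; ring
  have hfinal : Sval p s + Sval ε t = 1/4 * ∑ h : Cfg, μ h *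
      (∑ e : Fin 8, sgn (edgeS s t e) * (sgn (app h (edgeU e)) * sgn (app h (edgeV e)))) := by
    rw [← sum_split p ε s t, hswap]
  rw [hfinal]
  linarith


/-- Separation: a point of the cube satisfying all "odd" cycle inequalities lies in the
convex hull of the even-parity vertices. -/
lemma mem_parityPolytope (d : Fin 8 → ℝ)
    (hbox : ∀ e, 0 ≤ d e ∧ d e ≤ 1)
    (hodd : ∀ b : Fin 8 → Bool, xorSum b = true →
      1 ≤ ∑ e : Fin 8, (if b e then 1 - d e else d e)) :
    d ∈ convexHull ℝ
      ((((Finset.univ.filter (fun b : Fin 8 → Bool => xorSum b = false)).image vec) :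
        Finset (Fin 8 → ℝ)) : Set (Fin 8 → ℝ)) := by
  classical
  set V : Finset (Fin 8 → ℝ) :=
    (Finset.univ.filter (fun b : Fin 8 → Bool => xorSum b = false)).image vec with hV
  by_contra hd
  have hcl : IsClosed (convexHull ℝ (V : Set (Fin 8 → ℝ))) :=
    V.finite_toSet.isClosed_convexHull (𝕜 := ℝ)
  have hcv : Convex ℝ (convexHull ℝ (V : Set (Fin 8 → ℝ))) := convex_convexHull ℝ _
  obtain ⟨f, u, hfu, hud⟩ := geometric_hahn_banach_closed_point hcv hcl hd
  set σ : Fin 8 → ℝ := fun i => f (fun j => if i = j then 1 else 0) with hσ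
  have hf : ∀ x : Fin 8 → ℝ, f x = ∑ i : Fin 8, x i * σ i := by
    intro x
    conv_lhs => rw [pi_eq_sum_univ x]
    rw [map_sum]
    exact Finset.sum_congr rfl fun i _ => by rw [f.map_smul, smul_eq_mul]
  set b0 : Fin 8 → Bool := fun i => decide (0 < σ i) with hb0
  have hb0t : ∀ i, b0 i = true → 0 < σ i := fun i hi => of_decide_eq_true hi
  have hb0f : ∀ i, b0 i = false → σ i ≤ 0 := by
    intro i hi
    by_contra hc
    push_neg at hc
    rw [hb0] at hi
    simp [hc] at hi
  -- in both parity cases we find a vertex v ∈ V with f d ≤ f v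
  have hvert : ∃ v ∈ V, f d ≤ f v := by
    cases hxor : xorSum b0 with
    | false =>
      refine ⟨vec b0, Finset.mem_image_of_mem _ (Finset.mem_filter.2 ⟨Finset.mem_univ _, hxor⟩), ?_⟩
      rw [hf, hf]
      apply Finset.sum_le_sum
      intro i _
      cases hi : b0 i with
      | true =>
        have h1 : 0 < σ i := hb0t i hi
        have h2 := (hbox i).2
        simp only [vec, hi]
        simp only [if_true]
        nlinarith
      | false =>
        have h1 : σ i ≤ 0 := hb0f i hi
        have h2 := (hbox i).1
        simp only [vec, hi]
        simp
        nlinarith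
    | true =>
      obtain ⟨i0, -, hmin⟩ :=
        Finset.exists_min_image Finset.univ (fun i => |σ i|) ⟨0, Finset.mem_univ 0⟩
      set b1 : Fin 8 → Bool := Function.update b0 i0 (!b0 i0) with hb1
      have hxor1 : xorSum b1 = false := by rw [hb1, B5, hxor]; rfl
      refine ⟨vec b1, Finset.mem_image_of_mem _ (Finset.mem_filter.2 ⟨Finset.mem_univ _, hxor1⟩), ?_⟩
      -- f (vec b0) - f d ≥ |σ i0|
      have hw : ∀ e, 0 ≤ (if b0 e then 1 - d e else d e) := by
        intro e
        cases he : b0 e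
        · simpa using (hbox e).1
        · simp only [if_true]
          linarith [(hbox e).2]
      have hA : |σ i0| ≤ f (vec b0) - f d := by
        have hterm : ∀ i, |σ i| * (if b0 i then 1 - d i else d i) = vec b0 i * σ i - d i * σ i := by
          intro i
          cases hi : b0 i with
          | true =>
            rw [abs_of_pos (hb0t i hi)]
            simp [vec, hi]
            ring
          | false =>
            rw [abs_of_nonpos (hb0f i hi)]
            simp [vec, hi]
            ring
        calc |σ i0| = |σ i0| * 1 := (mul_one _).symm
          _ ≤ |σ i0| * ∑ e : Fin 8, (if b0 e then 1 - d e else d e) :=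
              mul_le_mul_of_nonneg_left (hodd b0 hxor) (abs_nonneg _)
          _ = ∑ e : Fin 8, |σ i0| * (if b0 e then 1 - d e else d e) := Finset.mul_sum _ _ _
          _ ≤ ∑ e : Fin 8, |σ e| * (if b0 e then 1 - d e else d e) :=
              Finset.sum_le_sum fun e _ =>
                mul_le_mul_of_nonneg_right (hmin e (Finset.mem_univ e)) (hw e)
          _ = ∑ e : Fin 8, (vec b0 e * σ e - d e * σ e) :=
              Finset.sum_congr rfl fun e _ => hterm e
          _ = f (vec b0) - f d := by rw [hf, hf, Finset.sum_sub_distrib]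
      have hB : f (vec b1) = f (vec b0) - |σ i0| := by
        have hterm : ∀ i, vec b1 i * σ i =
            vec b0 i * σ i + (if i = i0 then -|σ i0| else 0) := by
          intro i
          by_cases hi : i = i0
          · subst hi
            simp only [if_true, vec, hb1, Function.update_self]
            cases h0 : b0 i with
            | true =>
              rw [abs_of_pos (hb0t i h0)]
              simp [h0]
            | false =>
              rw [abs_of_nonpos (hb0f i h0)]
              simp [h0]
          · simp only [vec, hb1, Function.update_of_ne hi, hi, if_false, add_zero]
        rw [hf, hf, Finset.sum_congr rfl fun i _ => hterm i, Finset.sum_add_distrib]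
        rw [Finset.sum_ite_eq' Finset.univ i0 (fun _ => -|σ i0|)]
        simp only [Finset.mem_univ, if_true]
        ring
      linarith
  obtain ⟨v, hvV, hfdv⟩ := hvert
  have h1 := hfu v (subset_convexHull ℝ _ hvV)
  linarith



noncomputable def dOf (p ε : Fin 2 → Fin 2 → ℝ) : Fin 8 → ℝ := fun e => 1 - 2 * edgeQ p ε e

noncomputable def muOf (w : (Fin 8 → ℝ) → ℝ) (B : Finset (Fin 8 → Bool)) : Cfg → ℝ :=
  fun h => ∑ b ∈ B, (w (vec b) / 2) *
    ((if h = cfg0 b then (1:ℝ) else 0) + (if h = negc (cfg0 b) then 1 else 0))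

lemma sum_ind (P : Cfg → Prop) [DecidablePred P] (c : Cfg) :
    ∑ h : Cfg, (if P h then (if h = c then (1:ℝ) else 0) else 0) = if P c then 1 else 0 := by
  rw [Finset.sum_eq_single c]
  · simp
  · intro h _ hne; simp [hne]
  · intro hc; exact absurd (Finset.mem_univ c) hc

lemma filter_sum_mu (w : (Fin 8 → ℝ) → ℝ) (B : Finset (Fin 8 → Bool))
    (P : Cfg → Prop) [DecidablePred P] :
    ∑ h ∈ Finset.univ.filter P, muOf w B h
      = ∑ b ∈ B, (w (vec b) / 2) *
          ((if P (cfg0 b) then (1:ℝ) else 0) + (if P (negc (cfg0 b)) then 1 else 0)) := by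
  rw [Finset.sum_filter]
  have step1 : ∀ h : Cfg, (if P h then muOf w B h else 0)
      = ∑ b ∈ B, ((w (vec b) / 2) * (if P h then (if h = cfg0 b then (1:ℝ) else 0) else 0)
          + (w (vec b) / 2) * (if P h then (if h = negc (cfg0 b) then (1:ℝ) else 0) else 0)) := by
    intro h
    by_cases hP : P h
    · simp only [hP, if_true, muOf]
      exact Finset.sum_congr rfl fun b _ => by ring
    · simp [hP]
  rw [Finset.sum_congr rfl fun h _ => step1 h, Finset.sum_comm]
  apply Finset.sum_congr rfl
  intro b _
  rw [Finset.sum_add_distrib, ← Finset.mul_sum, ← Finset.mul_sum, sum_ind, sum_ind]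
  ring

lemma pair_indicator (x y : Bool) :
    ((if x = true ∧ y = true then (1:ℝ) else 0) + (if (!x) = true ∧ (!y) = true then 1 else 0))
      = if Bool.xor x y then 0 else 1 := by
  cases x <;> cases y <;> simp

set_option maxRecDepth 40000 in
/-- Sufficiency: the cycle inequalities imply membership in `ELFP`. -/
lemma elfp_of_ineqs (p ε : Fin 2 → Fin 2 → ℝ)
    (hq : ∀ e, 0 ≤ edgeQ p ε e ∧ edgeQ p ε e ≤ 1/2)
    (hS : ∀ s t : Fin 2 → Fin 2 → Bool, Bool.xor (xor4 s) (xor4 t) = true →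
      Sval p s + Sval ε t ≤ 3/2) :
    ELFP p ε := by
  classical
  set B : Finset (Fin 8 → Bool) := Finset.univ.filter (fun b => xorSum b = false) with hB
  have hbox : ∀ e, 0 ≤ dOf p ε e ∧ dOf p ε e ≤ 1 := by
    intro e
    constructor
    · have := (hq e).2; simp only [dOf]; linarith
    · have := (hq e).1; simp only [dOf]; linarith
  have hodd : ∀ b : Fin 8 → Bool, xorSum b = true →
      1 ≤ ∑ e : Fin 8, (if b e then 1 - dOf p ε e else dOf p ε e) := by
    intro b hb
    have hes : ∀ e, edgeS (spat b) (tpat b) e = !(b e) := by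
      intro e; fin_cases e <;> rfl
    have hpar : Bool.xor (xor4 (spat b)) (xor4 (tpat b)) = true := by rw [B3]; exact hb
    have hSb := hS _ _ hpar
    have he : ∀ e, (if b e then 1 - dOf p ε e else dOf p ε e)
        = 1/2 - 2 * (sgn (edgeS (spat b) (tpat b) e) * (edgeQ p ε e - 1/4)) := by
      intro e
      rw [hes e]
      cases hbe : b e <;> simp only [dOf, sgn, Bool.not_true, Bool.not_false] <;> simp <;> ring
    rw [Finset.sum_congr rfl fun e _ => he e, Finset.sum_sub_distrib, ← Finset.mul_sum,
      sum_split p ε (spat b) (tpat b)]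
    have hconst : ∑ _e : Fin 8, (1/2 : ℝ) = 4 := by simp; norm_num
    rw [hconst]
    linarith
  have hmem := mem_parityPolytope (dOf p ε) hbox hodd
  rw [Finset.mem_convexHull'] at hmem
  obtain ⟨w, hw0, hw1, hwd⟩ := hmem
  have hinj : ∀ x ∈ B, ∀ y ∈ B, vec x = vec y → x = y := by
    intro x _ y _ hxy
    funext e
    have h2 := congrFun hxy e
    simp only [vec] at h2
    cases hx : x e <;> cases hy : y e <;> rw [hx, hy] at h2 <;> first | rfl | (norm_num at h2)
  have hsum1 : ∑ b ∈ B, w (vec b) = 1 := by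
    rw [← Finset.sum_image hinj]; exact hw1
  have hde : ∀ e, ∑ b ∈ B, w (vec b) * (if b e then (1:ℝ) else 0) = dOf p ε e := by
    intro e
    have h2 := congrFun hwd e
    rw [Finset.sum_apply] at h2
    simp only [Pi.smul_apply, smul_eq_mul] at h2
    calc ∑ b ∈ B, w (vec b) * (if b e then (1:ℝ) else 0)
        = ∑ b ∈ B, (fun v : Fin 8 → ℝ => w v * v e) (vec b) := rfl
      _ = ∑ v ∈ B.image vec, w v * v e :=
            (Finset.sum_image (f := fun v : Fin 8 → ℝ => w v * v e) hinj).symm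
      _ = dOf p ε e := h2
  have hval : ∀ e : Fin 8, ∑ b ∈ B, (w (vec b)/2) * (if b e then (0:ℝ) else 1)
      = edgeQ p ε e := by
    intro e
    have hterm : ∀ b : Fin 8 → Bool, (w (vec b)/2) * (if b e then (0:ℝ) else 1)
        = w (vec b)/2 - (w (vec b) * (if b e then (1:ℝ) else 0))/2 := by
      intro b; cases hbe : b e <;> simp <;> ring
    rw [Finset.sum_congr rfl fun b _ => hterm b, Finset.sum_sub_distrib,
      ← Finset.sum_div, ← Finset.sum_div, hsum1, hde e]
    simp only [dOf]
    ring
  refine ⟨muOf w B, ?_, ?_, ?_, ?_, ?_, ?_⟩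
  · -- nonneg
    intro h
    apply Finset.sum_nonneg
    intro b hb
    have hwb : 0 ≤ w (vec b) := hw0 _ (Finset.mem_image_of_mem _ hb)
    apply mul_nonneg (by linarith)
    apply add_nonneg <;> split <;> norm_num
  · -- total mass
    rw [show ∑ h : Cfg, muOf w B h = ∑ h ∈ Finset.univ.filter (fun _ : Cfg => True), muOf w B h
      by rw [Finset.filter_true]]
    rw [filter_sum_mu]
    simp only [if_true]
    calc ∑ b ∈ B, w (vec b) / 2 * ((1:ℝ) + 1) = ∑ b ∈ B, w (vec b) :=
          Finset.sum_congr rfl fun b _ => by ring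
      _ = 1 := hsum1
  · -- marginals
    intro k i j
    rw [filter_sum_mu]
    have hval1 : ∀ b ∈ B, (w (vec b)/2) *
        ((if (cfg0 b) k i j = true then (1:ℝ) else 0)
          + (if (negc (cfg0 b)) k i j = true then 1 else 0)) = w (vec b) / 2 := by
      intro b _
      have : ((if (cfg0 b) k i j = true then (1:ℝ) else 0)
          + (if (negc (cfg0 b)) k i j = true then 1 else 0)) = 1 := by
        cases hc : cfg0 b k i j <;> simp [negc, hc]
      rw [this, mul_one]
    rw [Finset.sum_congr rfl hval1, ← Finset.sum_div, hsum1]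
  · -- p pairs
    have pairgoal : ∀ (e : Fin 8) (A C : Pt),
        (∀ b, xorSum b = false → Bool.xor (app (cfg0 b) A) (app (cfg0 b) C) = b e) →
        ∑ h ∈ Finset.univ.filter (fun h => app h A = true ∧ app h C = true), muOf w B h
          = edgeQ p ε e := by
      intro e A C hxy
      rw [filter_sum_mu, ← hval e]
      refine Finset.sum_congr rfl fun b hb => ?_
      have hbB : xorSum b = false := (Finset.mem_filter.1 hb).2
      congr 1
      have h7 := hxy b hbB
      have hneg1 : app (negc (cfg0 b)) A = !(app (cfg0 b) A) := rfl
      have hneg2 : app (negc (cfg0 b)) C = !(app (cfg0 b) C) := rfl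
      calc ((if app (cfg0 b) A = true ∧ app (cfg0 b) C = true then (1:ℝ) else 0)
            + (if app (negc (cfg0 b)) A = true ∧ app (negc (cfg0 b)) C = true then 1 else 0))
          = if Bool.xor (app (cfg0 b) A) (app (cfg0 b) C) then 0 else 1 := by
            rw [hneg1, hneg2, pair_indicator]
        _ = if b e then 0 else 1 := by rw [h7]
    intro i j
    fin_cases i <;> fin_cases j
    · exact pairgoal 7 (0,0,0) (1,0,0)
        (fun b hb => (Bool.xor_comm _ _).trans (B4 b hb 7))
    · exact pairgoal 1 (0,0,1) (1,0,1) (fun b hb => B4 b hb 1)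
    · exact pairgoal 5 (0,1,0) (1,1,0) (fun b hb => B4 b hb 5)
    · exact pairgoal 3 (0,1,1) (1,1,1)
        (fun b hb => (Bool.xor_comm _ _).trans (B4 b hb 3))
  · -- ε row pairs
    have pairgoal : ∀ (e : Fin 8) (A C : Pt),
        (∀ b, xorSum b = false → Bool.xor (app (cfg0 b) A) (app (cfg0 b) C) = b e) →
        ∑ h ∈ Finset.univ.filter (fun h => app h A = true ∧ app h C = true), muOf w B h
          = edgeQ p ε e := by
      intro e A C hxy
      rw [filter_sum_mu, ← hval e]
      refine Finset.sum_congr rfl fun b hb => ?_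
      have hbB : xorSum b = false := (Finset.mem_filter.1 hb).2
      congr 1
      have h7 := hxy b hbB
      have hneg1 : app (negc (cfg0 b)) A = !(app (cfg0 b) A) := rfl
      have hneg2 : app (negc (cfg0 b)) C = !(app (cfg0 b) C) := rfl
      calc ((if app (cfg0 b) A = true ∧ app (cfg0 b) C = true then (1:ℝ) else 0)
            + (if app (negc (cfg0 b)) A = true ∧ app (negc (cfg0 b)) C = true then 1 else 0))
          = if Bool.xor (app (cfg0 b) A) (app (cfg0 b) C) then 0 else 1 := by
            rw [hneg1, hneg2, pair_indicator]
        _ = if b e then 0 else 1 := by rw [h7]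
    intro i
    fin_cases i
    · exact pairgoal 0 (0,0,0) (0,0,1) (fun b hb => B4 b hb 0)
    · exact pairgoal 4 (0,1,0) (0,1,1)
        (fun b hb => (Bool.xor_comm _ _).trans (B4 b hb 4))
  · -- ε column pairs
    have pairgoal : ∀ (e : Fin 8) (A C : Pt),
        (∀ b, xorSum b = false → Bool.xor (app (cfg0 b) A) (app (cfg0 b) C) = b e) →
        ∑ h ∈ Finset.univ.filter (fun h => app h A = true ∧ app h C = true), muOf w B h
          = edgeQ p ε e := by
      intro e A C hxy
      rw [filter_sum_mu, ← hval e]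
      refine Finset.sum_congr rfl fun b hb => ?_
      have hbB : xorSum b = false := (Finset.mem_filter.1 hb).2
      congr 1
      have h7 := hxy b hbB
      have hneg1 : app (negc (cfg0 b)) A = !(app (cfg0 b) A) := rfl
      have hneg2 : app (negc (cfg0 b)) C = !(app (cfg0 b) C) := rfl
      calc ((if app (cfg0 b) A = true ∧ app (cfg0 b) C = true then (1:ℝ) else 0)
            + (if app (negc (cfg0 b)) A = true ∧ app (negc (cfg0 b)) C = true then 1 else 0))
          = if Bool.xor (app (cfg0 b) A) (app (cfg0 b) C) then 0 else 1 := by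
            rw [hneg1, hneg2, pair_indicator]
        _ = if b e then 0 else 1 := by rw [h7]
    intro j
    fin_cases j
    · exact pairgoal 6 (1,0,0) (1,1,0)
        (fun b hb => (Bool.xor_comm _ _).trans (B4 b hb 6))
    · exact pairgoal 2 (1,0,1) (1,1,1) (fun b hb => B4 b hb 2)



lemma sval_le (x : Fin 2 → Fin 2 → ℝ) (s : Fin 2 → Fin 2 → Bool) (M : ℝ)
    (hM : ∀ i j, |x i j - 1/4| ≤ M) : Sval x s ≤ 4 * M := by
  have hterm : ∀ i j, (if s i j then (1:ℝ) else -1) * (x i j - 1/4) ≤ M := by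
    intro i j
    have h2 := hM i j
    rw [abs_le] at h2
    by_cases h : s i j <;> simp [h] <;> linarith [h2.1, h2.2]
  calc Sval x s ≤ ∑ _i : Fin 2, ∑ _j : Fin 2, M :=
        Finset.sum_le_sum fun i _ => Finset.sum_le_sum fun j _ => hterm i j
    _ = 4 * M := by simp [Fin.sum_univ_two]; ring

end FitAux

/-- the Fit set for the quantum ("quant") constraint:
`ε` is compatible with every `p ∈ [0,1/2]⁴` satisfying `max S₁p ≤ √2/2` iff
`max S₀ε ≤ (3 − √2)/2` and `max S₁ε ≤ 1/2`. -/
theorem fit_quant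
    (ε : Fin 2 → Fin 2 → ℝ)
    (hε : ∀ k i, ε k i ∈ Set.Icc (0 : ℝ) (1 / 2)) :
    (∀ p : Fin 2 → Fin 2 → ℝ, (∀ i j, p i j ∈ Set.Icc (0 : ℝ) (1 / 2)) →
        maxS1 p ≤ Real.sqrt 2 / 2 → ELFP p ε) ↔
      (maxS0 ε ≤ (3 - Real.sqrt 2) / 2 ∧ maxS1 ε ≤ 1 / 2) := by
  constructor
  · -- (a) → (b)
    intro ha
    have hr0 : (0:ℝ) ≤ Real.sqrt 2 := Real.sqrt_nonneg 2
    have hr2 : Real.sqrt 2 ^ 2 = 2 := Real.sq_sqrt (by norm_num)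
    have hrle : Real.sqrt 2 ≤ 2 := by nlinarith
    have hrge : (1:ℝ) ≤ Real.sqrt 2 := by nlinarith
    constructor
    · -- maxS0 ε ≤ (3 - √2)/2
      apply Finset.sup'_le
      intro t ht
      have hte : Even (plusCount t) := (Finset.mem_filter.1 ht).2
      have hxt : FitAux.xor4 t = false := (FitAux.L1 t).1 hte
      set s : Fin 2 → Fin 2 → Bool := ![![true,false],![false,false]] with hsdef
      set p : Fin 2 → Fin 2 → ℝ :=
        fun i j => if s i j then 1/4 + Real.sqrt 2/8 else 1/4 - Real.sqrt 2/8 with hpdef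
      have hprange : ∀ i j, p i j ∈ Set.Icc (0:ℝ) (1/2) := by
        intro i j
        rw [Set.mem_Icc]
        by_cases h : s i j <;> simp [hpdef, h] <;> constructor <;> linarith
      have habs : ∀ i j, |p i j - 1/4| ≤ Real.sqrt 2/8 := by
        intro i j
        by_cases h : s i j
        · have h3 : p i j - 1/4 = Real.sqrt 2/8 := by simp [hpdef, h]
          rw [h3, abs_of_nonneg (by linarith)]
        · have h3 : p i j - 1/4 = -(Real.sqrt 2/8) := by simp [hpdef, h]
          rw [h3, abs_neg, abs_of_nonneg (by linarith)]
      have hmax1 : maxS1 p ≤ Real.sqrt 2/2 := by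
        apply Finset.sup'_le
        intro s' _
        calc Sval p s' ≤ 4 * (Real.sqrt 2/8) := FitAux.sval_le p s' _ habs
          _ = Real.sqrt 2/2 := by ring
      have hE := ha p hprange hmax1
      have hxs : FitAux.xor4 s = true := by rw [hsdef]; rfl
      have hpar : Bool.xor (FitAux.xor4 s) (FitAux.xor4 t) = true := by
        rw [hxs, hxt]; rfl
      have hb := FitAux.elfp_bound p ε hE s t hpar
      have hsv : Sval p s = Real.sqrt 2/2 := by
        simp [Sval, Fin.sum_univ_two, hpdef, hsdef]
        ring
      linarith
    · -- maxS1 ε ≤ 1/2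
      apply Finset.sup'_le
      intro t ht
      have hto : ¬ Even (plusCount t) := (Finset.mem_filter.1 ht).2
      have hxt : FitAux.xor4 t = true := by
        cases hx : FitAux.xor4 t
        · exact absurd ((FitAux.L1 t).2 hx) hto
        · rfl
      have hr0 : (0:ℝ) ≤ Real.sqrt 2 := Real.sqrt_nonneg 2
      set p : Fin 2 → Fin 2 → ℝ := fun _ _ => (1/2 : ℝ) with hpdef
      have hprange : ∀ i j, p i j ∈ Set.Icc (0:ℝ) (1/2) := by
        intro i j; rw [Set.mem_Icc]; constructor <;> norm_num [hpdef]
      have hmax1 : maxS1 p ≤ Real.sqrt 2/2 := by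
        apply Finset.sup'_le
        intro s' hs'
        have hso : ¬ Even (plusCount s') := (Finset.mem_filter.1 hs').2
        have hxs' : FitAux.xor4 s' = true := by
          cases hx : FitAux.xor4 s'
          · exact absurd ((FitAux.L1 s').2 hx) hso
          · rfl
        have hz := FitAux.Z3 s' hxs'
        have hzr : ((FitAux.sgnZ (s' 0 0) + FitAux.sgnZ (s' 0 1)
            + FitAux.sgnZ (s' 1 0) + FitAux.sgnZ (s' 1 1) : ℤ) : ℝ) ≤ 2 := by exact_mod_cast hz
        have hcast : ∀ b : Bool, ((FitAux.sgnZ b : ℤ) : ℝ) = (if b then (1:ℝ) else -1) := by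
          intro b; cases b <;> simp [FitAux.sgnZ]
        have hclean : Sval p s' = ((FitAux.sgnZ (s' 0 0) + FitAux.sgnZ (s' 0 1)
            + FitAux.sgnZ (s' 1 0) + FitAux.sgnZ (s' 1 1) : ℤ) : ℝ) / 4 := by
          cases h00 : s' 0 0 <;> cases h01 : s' 0 1 <;> cases h10 : s' 1 0 <;> cases h11 : s' 1 1 <;>
            simp [Sval, Fin.sum_univ_two, hpdef, FitAux.sgnZ, h00, h01, h10, h11] <;> norm_num
        rw [hclean]
        linarith
      have hE := ha p hprange hmax1
      set s : Fin 2 → Fin 2 → Bool := fun _ _ => true with hsdef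
      have hxs : FitAux.xor4 s = false := rfl
      have hpar : Bool.xor (FitAux.xor4 s) (FitAux.xor4 t) = true := by
        rw [hxs, hxt]; rfl
      have hb := FitAux.elfp_bound p ε hE s t hpar
      have hsv : Sval p s = 1 := by
        simp [Sval, Fin.sum_univ_two, hpdef, hsdef]
        norm_num
      linarith
  · -- (b) → (a)
    rintro ⟨h0, h1⟩ p hprange hp1
    apply FitAux.elfp_of_ineqs
    · intro e
      fin_cases e
      · exact ⟨(hε 0 0).1, (hε 0 0).2⟩
      · exact ⟨(hprange 0 1).1, (hprange 0 1).2⟩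
      · exact ⟨(hε 1 1).1, (hε 1 1).2⟩
      · exact ⟨(hprange 1 1).1, (hprange 1 1).2⟩
      · exact ⟨(hε 0 1).1, (hε 0 1).2⟩
      · exact ⟨(hprange 1 0).1, (hprange 1 0).2⟩
      · exact ⟨(hε 1 0).1, (hε 1 0).2⟩
      · exact ⟨(hprange 0 0).1, (hprange 0 0).2⟩
    · intro s t hpar
      by_cases hse : Even (plusCount s)
      · have hxs : FitAux.xor4 s = false := (FitAux.L1 s).1 hse
        have hxt : FitAux.xor4 t = true := by
          rw [hxs] at hpar; simpa using hpar
        have hto : ¬ Even (plusCount t) := by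
          rw [FitAux.L1 t, hxt]; simp
        have hSe : Sval ε t ≤ 1/2 :=
          le_trans (Finset.le_sup' (Sval ε)
            (Finset.mem_filter.2 ⟨Finset.mem_univ t, hto⟩)) h1
        have habs : ∀ i j, |p i j - 1/4| ≤ 1/4 := by
          intro i j
          rw [abs_le]
          constructor <;> linarith [(hprange i j).1, (hprange i j).2]
        have hSp : Sval p s ≤ 1 := by
          calc Sval p s ≤ 4 * (1/4) := FitAux.sval_le p s _ habs
            _ = 1 := by norm_num
        linarith
      · have hxs : FitAux.xor4 s = true := by
          cases hx : FitAux.xor4 s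
          · exact absurd ((FitAux.L1 s).2 hx) hse
          · rfl
        have hxt : FitAux.xor4 t = false := by
          cases hx : FitAux.xor4 t
          · rfl
          · exfalso; rw [hxs, hx] at hpar; simp at hpar
        have hte : Even (plusCount t) := (FitAux.L1 t).2 hxt
        have hSp : Sval p s ≤ Real.sqrt 2 / 2 :=
          le_trans (Finset.le_sup' (Sval p)
            (Finset.mem_filter.2 ⟨Finset.mem_univ s, hse⟩)) hp1
        have hSe : Sval ε t ≤ (3 - Real.sqrt 2)/2 :=
          le_trans (Finset.le_sup' (Sval ε)
            (Finset.mem_filter.2 ⟨Finset.mem_univ t, hte⟩)) h0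
        linarith
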